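/- arXiv:2510.23498 — 2 statements merged into one kernel-verified Lean document; each statement's English description precedes it below -/
import Mathlib

section
/- Let g = h · Σ_{i=0}^{N−1} v_i and g̃ be computed by the recursion s_0 = 0, s_{i+1} = (s_i + h ṽ_i)(1 + r_i) with |r_i| ≤ u_H, where ‖v_i − ṽ_i‖ ≤ ε and ‖ṽ_i‖ ≤ M for all i (scalar case). Then |g − g̃| ≤ N h ε + C N u_H (N h M + terms of higher order in u_H); in particular if T = N h is fixed, |g − g̃| ≤ T ε + O(T M u_H / h). -/
open Real Finset

theorem gradient_accumulation_error
    (v vt : ℕ → ℝ) (s : ℕ → ℝ) (r : ℕ → ℝ)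
    (h ε M uH : ℝ) (N : ℕ)
    (hh : 0 < h) (hε : 0 ≤ ε) (hM : 0 ≤ M) (huH : 0 ≤ uH)
    (hs0 : s 0 = 0)
    (hsrec : ∀ i, s (i + 1) = (s i + h * vt i) * (1 + r i))
    (hr : ∀ i, |r i| ≤ uH)
    (hv : ∀ i, |v i - vt i| ≤ ε)
    (hvt : ∀ i, |vt i| ≤ M) :
    |h * (∑ i ∈ Finset.range N, v i) - s N| ≤
      N * h * ε + N * uH * (N * h * M) * (1 + uH) ^ N := by
  have key : ∀ n : ℕ, |s n - h * ∑ i ∈ Finset.range n, vt i| ≤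
      n * uH * (n * h * M) * (1 + uH) ^ n := by
    intro n
    induction n with
    | zero => simp [hs0]
    | succ n ih =>
      have hSn : |∑ i ∈ Finset.range (n+1), vt i| ≤ (n+1) * M := by
        calc |∑ i ∈ Finset.range (n+1), vt i| ≤ ∑ i ∈ Finset.range (n+1), |vt i| :=
              Finset.abs_sum_le_sum_abs _ _
          _ ≤ ∑ i ∈ Finset.range (n+1), M := Finset.sum_le_sum (fun i _ => hvt i)
          _ = (n+1) * M := by simp [mul_comm]
      have hrn := hr n
      have e1 : s (n+1) - h * ∑ i ∈ Finset.range (n+1), vt i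
          = (s n - h * ∑ i ∈ Finset.range n, vt i) * (1 + r n)
            + r n * (h * ∑ i ∈ Finset.range (n+1), vt i) := by
        rw [hsrec n, Finset.sum_range_succ]; ring
      have h1 : |(s n - h * ∑ i ∈ Finset.range n, vt i) * (1 + r n)|
          ≤ (n * uH * (n * h * M) * (1 + uH) ^ n) * (1 + uH) := by
        rw [abs_mul]
        apply mul_le_mul ih _ (abs_nonneg _)
        · positivity
        · have := (abs_le.mp hrn).2
          calc |1 + r n| ≤ |(1:ℝ)| + |r n| := abs_add_le _ _
            _ ≤ 1 + uH := by rw [abs_one]; linarith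
      have h2 : |r n * (h * ∑ i ∈ Finset.range (n+1), vt i)| ≤ uH * ((n+1) * h * M) := by
        rw [abs_mul, abs_mul]
        have : |h| * |∑ i ∈ Finset.range (n+1), vt i| ≤ h * ((n+1) * M) := by
          rw [abs_of_pos hh]
          exact mul_le_mul_of_nonneg_left hSn hh.le
        calc |r n| * (|h| * |∑ i ∈ Finset.range (n+1), vt i|)
            ≤ uH * (h * ((n+1) * M)) :=
              mul_le_mul hrn this (by positivity) huH
          _ = uH * ((n+1) * h * M) := by ring
      have hP : (1:ℝ) ≤ (1 + uH) ^ (n+1) := one_le_pow₀ (by linarith)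
      have hP0 : (0:ℝ) ≤ (1 + uH) ^ (n+1) := by positivity
      calc |s (n+1) - h * ∑ i ∈ Finset.range (n+1), vt i|
          ≤ |(s n - h * ∑ i ∈ Finset.range n, vt i) * (1 + r n)|
            + |r n * (h * ∑ i ∈ Finset.range (n+1), vt i)| := by
            rw [e1]; exact abs_add_le _ _
        _ ≤ (n * uH * (n * h * M) * (1 + uH) ^ n) * (1 + uH) + uH * ((n+1) * h * M) :=
            add_le_add h1 h2
        _ ≤ (n+1 : ℕ) * uH * ((n+1 : ℕ) * h * M) * (1 + uH) ^ (n+1) := by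
            push_cast
            have : (n * uH * (n * h * M)) * (1 + uH) ^ (n+1) + uH * ((n+1) * h * M) * 1
                ≤ ((n:ℝ)+1) * uH * (((n:ℝ)+1) * h * M) * (1 + uH) ^ (n+1) := by
              nlinarith [mul_nonneg (mul_nonneg huH hh.le) hM,
                mul_nonneg (mul_nonneg (mul_nonneg huH hh.le) hM) (Nat.cast_nonneg n : (0:ℝ) ≤ n),
                mul_le_mul_of_nonneg_left hP (mul_nonneg (mul_nonneg (mul_nonneg huH hh.le) hM) (by positivity : (0:ℝ) ≤ (n:ℝ)+1))]
            calc (n * uH * (n * h * M) * (1 + uH) ^ n) * (1 + uH) + uH * ((n+1) * h * M)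
                = (n * uH * (n * h * M)) * (1 + uH) ^ (n+1) + uH * ((n+1) * h * M) * 1 := by
                  rw [pow_succ]; ring
              _ ≤ _ := this
  have hA : |h * (∑ i ∈ Finset.range N, v i) - h * ∑ i ∈ Finset.range N, vt i|
      ≤ N * h * ε := by
    have : h * (∑ i ∈ Finset.range N, v i) - h * ∑ i ∈ Finset.range N, vt i
        = h * ∑ i ∈ Finset.range N, (v i - vt i) := by
      rw [Finset.sum_sub_distrib]; ring
    rw [this, abs_mul, abs_of_pos hh]
    calc h * |∑ i ∈ Finset.range N, (v i - vt i)|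
        ≤ h * ∑ i ∈ Finset.range N, |v i - vt i| := by
          exact mul_le_mul_of_nonneg_left (Finset.abs_sum_le_sum_abs _ _) hh.le
      _ ≤ h * ∑ i ∈ Finset.range N, ε :=
          mul_le_mul_of_nonneg_left (Finset.sum_le_sum (fun i _ => hv i)) hh.le
      _ = N * h * ε := by simp [mul_comm, mul_assoc, mul_left_comm]
  calc |h * (∑ i ∈ Finset.range N, v i) - s N|
      ≤ |h * (∑ i ∈ Finset.range N, v i) - h * ∑ i ∈ Finset.range N, vt i|
        + |h * (∑ i ∈ Finset.range N, vt i) - s N| := by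
        have := abs_sub_abs_le_abs_sub (h * (∑ i ∈ Finset.range N, v i)) (s N)
        exact abs_sub_le _ _ _
    _ ≤ N * h * ε + N * uH * (N * h * M) * (1 + uH) ^ N := by
        have := key N
        rw [abs_sub_comm (h * ∑ i ∈ Finset.range N, vt i) (s N)]
        exact add_le_add hA this
end

section
/- Suppose the forward errors satisfy ‖δ_{y_i}‖ ≤ e^{t_N K₁} ‖δ_{y_0}‖ + (e^{t_N K₁} − 1)(K₂ u_L + K₃ u_H/h) for all i ≤ N, the terminal adjoint error satisfies ‖δ_{a_N}‖ ≤ (L/m) M_y ‖δ_{y_N}‖ + M_C u_L, and the adjoint recursion satisfies ‖δ_{a_{i−1}}‖ ≤ (1 + hγ)‖δ_{a_i}‖ + h(θ‖δ_{y_{i−1}}‖ + σ u_L + u_H/h). Then there exist constants K₄,…,K₇ depending only on (K₁,K₂,K₃,L,m,M_y,M_C,γ,θ,σ,t_N) such that ‖δ_{a_i}‖ ≤ e^{(t_N − t_i)K₄} ‖δ_{a_N}‖ + K₅‖δ_{y_0}‖ + K₆ u_L + K₇ u_H/h for all i, where t_i = i h. -/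
open Real

theorem main_adjoint_combination
    (K₁ K₂ K₃ L m My MC γ θ σ T : ℝ)
    (hK₁ : 0 ≤ K₁) (hK₂ : 0 ≤ K₂) (hK₃ : 0 ≤ K₃)
    (hL : 0 ≤ L) (hm : 0 < m) (hMy : 0 ≤ My) (hMC : 0 ≤ MC)
    (hγ : 0 ≤ γ) (hθ : 0 ≤ θ) (hσ : 0 ≤ σ) (hT : 0 < T) :
    ∃ K₄ K₅ K₆ K₇ : ℝ, 0 ≤ K₄ ∧ 0 ≤ K₅ ∧ 0 ≤ K₆ ∧ 0 ≤ K₇ ∧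
      ∀ (N : ℕ) (h uL uH : ℝ) (δy δa : ℕ → ℝ),
        0 < h → (N : ℝ) * h = T →
        (∀ i, 0 ≤ δy i) → (∀ i, 0 ≤ δa i) →
        0 ≤ uL → 0 ≤ uH →
        (∀ i ≤ N, δy i ≤ Real.exp (T * K₁) * δy 0 +
          (Real.exp (T * K₁) - 1) * (K₂ * uL + K₃ * uH / h)) →
        (δa N ≤ (L / m) * My * δy N + MC * uL) →
        (∀ i, 1 ≤ i → i ≤ N →
          δa (i - 1) ≤ (1 + h * γ) * δa i +
            h * (θ * δy (i - 1) + σ * uL + uH / h)) →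
        ∀ i ≤ N, δa i ≤ Real.exp ((T - i * h) * K₄) * δa N +
          K₅ * δy 0 + K₆ * uL + K₇ * uH / h := by
  have hexp1 : (1:ℝ) ≤ Real.exp (T * K₁) := Real.one_le_exp (by positivity)
  have hexpγ : (0:ℝ) ≤ Real.exp (T * γ) := (Real.exp_pos _).le
  have hem1 : (0:ℝ) ≤ Real.exp (T*K₁) - 1 := by linarith
  refine ⟨γ, T * Real.exp (T*γ) * θ * Real.exp (T*K₁),
    T * Real.exp (T*γ) * (θ * (Real.exp (T*K₁) - 1) * K₂ + σ),
    T * Real.exp (T*γ) * (θ * (Real.exp (T*K₁) - 1) * K₃ + 1), hγ, ?_, ?_, ?_, ?_⟩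
  · positivity
  · have h1 : (0:ℝ) ≤ θ * (Real.exp (T*K₁) - 1) * K₂ + σ := by positivity
    positivity
  · have h1 : (0:ℝ) ≤ θ * (Real.exp (T*K₁) - 1) * K₃ + 1 := by positivity
    positivity
  intro N h uL uH δy δa hh hNh hy ha huL huH hfwd _hterm hrec i hiN
  obtain ⟨Y, hYdef⟩ : ∃ Y : ℝ, Y = Real.exp (T * K₁) * δy 0 +
      (Real.exp (T * K₁) - 1) * (K₂ * uL + K₃ * uH / h) := ⟨_, rfl⟩
  obtain ⟨C, hCdef⟩ : ∃ C : ℝ, C = θ * Y + σ * uL + uH / h := ⟨_, rfl⟩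
  have hfwd' : ∀ i ≤ N, δy i ≤ Y := by intro i hi; rw [hYdef]; exact hfwd i hi
  have hYnn : 0 ≤ Y := le_trans (hy 0) (hfwd' 0 (Nat.zero_le N))
  have hCnn : 0 ≤ C := by
    have h1 : 0 ≤ θ * Y := mul_nonneg hθ hYnn
    have h2 : 0 ≤ σ * uL := mul_nonneg hσ huL
    have h3 : 0 ≤ uH / h := div_nonneg huH hh.le
    rw [hCdef]; linarith
  have hhC : 0 ≤ h * C := mul_nonneg hh.le hCnn
  -- key downward induction
  have key : ∀ j ≤ N, δa (N - j) ≤ Real.exp ((j:ℝ) * h * γ) * (δa N + (j:ℝ) * h * C) := by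
    intro j
    induction j with
    | zero => intro _; simp
    | succ j ih =>
      intro hjN
      have hj : j ≤ N := Nat.le_of_succ_le hjN
      have IH := ih hj
      have h1 : 1 ≤ N - j := by omega
      have hstep := hrec (N - j) h1 (Nat.sub_le _ _)
      have heq : N - j - 1 = N - (j+1) := by omega
      rw [heq] at hstep
      have hyb : δy (N - (j+1)) ≤ Y := hfwd' _ (Nat.sub_le _ _)
      have hbr : h * (θ * δy (N - (j+1)) + σ * uL + uH / h) ≤ h * C := by
        apply mul_le_mul_of_nonneg_left _ hh.le
        have := mul_le_mul_of_nonneg_left hyb hθ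
        rw [hCdef]; linarith
      have hinner : 0 ≤ δa N + (j:ℝ) * h * C := by
        have h4 : (0:ℝ) ≤ (j:ℝ) * h * C := by positivity
        linarith [ha N]
      have hexpj : (0:ℝ) ≤ Real.exp ((j:ℝ) * h * γ) := (Real.exp_pos _).le
      have hpos : (0:ℝ) ≤ 1 + h * γ := by positivity
      have hA : δa (N - (j+1)) ≤ (1 + h * γ) * (Real.exp ((j:ℝ) * h * γ) * (δa N + (j:ℝ) * h * C)) + h * C := by
        have := mul_le_mul_of_nonneg_left IH hpos
        linarith
      have hexpstep : (1 + h * γ) ≤ Real.exp (h * γ) := by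
        have := Real.add_one_le_exp (h * γ); linarith
      have hE : Real.exp (h * γ) * Real.exp ((j:ℝ) * h * γ) = Real.exp (((j:ℝ)+1) * h * γ) := by
        rw [← Real.exp_add]; congr 1; ring
      have t1 : (1 + h * γ) * (Real.exp ((j:ℝ) * h * γ) * (δa N + (j:ℝ) * h * C)) ≤
          Real.exp (((j:ℝ)+1) * h * γ) * (δa N + (j:ℝ) * h * C) := by
        rw [← hE]
        calc (1 + h * γ) * (Real.exp ((j:ℝ) * h * γ) * (δa N + (j:ℝ) * h * C))
            ≤ Real.exp (h * γ) * (Real.exp ((j:ℝ) * h * γ) * (δa N + (j:ℝ) * h * C)) :=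
              mul_le_mul_of_nonneg_right hexpstep (mul_nonneg hexpj hinner)
          _ = Real.exp (h * γ) * Real.exp ((j:ℝ) * h * γ) * (δa N + (j:ℝ) * h * C) := by ring
      have hone : (1:ℝ) ≤ Real.exp (((j:ℝ)+1) * h * γ) := Real.one_le_exp (by positivity)
      have t2 : h * C ≤ Real.exp (((j:ℝ)+1) * h * γ) * (h * C) := le_mul_of_one_le_left hhC hone
      have t3 : Real.exp (((j:ℝ)+1) * h * γ) * (δa N + (j:ℝ) * h * C) +
          Real.exp (((j:ℝ)+1) * h * γ) * (h * C) =
          Real.exp (((j:ℝ)+1) * h * γ) * (δa N + ((j:ℝ)+1) * h * C) := by ring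
      have hcast : ((j+1 : ℕ):ℝ) = (j:ℝ) + 1 := by push_cast; ring
      rw [hcast]
      linarith
  -- apply with j = N - i
  have hNi : N - (N - i) = i := by omega
  have hcast : ((N - i : ℕ):ℝ) = (N:ℝ) - (i:ℝ) := by
    rw [Nat.cast_sub hiN]
  have hmain := key (N - i) (Nat.sub_le _ _)
  rw [hNi, hcast] at hmain
  have hjh : ((N:ℝ) - (i:ℝ)) * h = T - (i:ℝ) * h := by rw [← hNh]; ring
  rw [hjh] at hmain
  have hih : 0 ≤ (i:ℝ) * h := by positivity
  have htle : T - (i:ℝ) * h ≤ T := by linarith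
  have htnn : 0 ≤ T - (i:ℝ) * h := by
    rw [← hjh]
    have h5 : (i:ℝ) ≤ (N:ℝ) := by exact_mod_cast hiN
    have h6 := sub_nonneg.mpr h5
    positivity
  have hexpmono : Real.exp ((T - (i:ℝ) * h) * γ) ≤ Real.exp (T * γ) :=
    Real.exp_le_exp.mpr (mul_le_mul_of_nonneg_right htle hγ)
  have hb : (T - (i:ℝ) * h) * C ≤ T * C := mul_le_mul_of_nonneg_right htle hCnn
  have hfinal : Real.exp ((T - (i:ℝ) * h) * γ) * ((T - (i:ℝ) * h) * C) ≤
      Real.exp (T * γ) * (T * C) :=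
    mul_le_mul hexpmono hb (by positivity) hexpγ
  have hsplit : Real.exp ((T - (i:ℝ) * h) * γ) * (δa N + (T - (i:ℝ) * h) * C) =
      Real.exp ((T - (i:ℝ) * h) * γ) * δa N +
      Real.exp ((T - (i:ℝ) * h) * γ) * ((T - (i:ℝ) * h) * C) := by ring
  have hexpand : Real.exp (T * γ) * (T * C) =
      T * Real.exp (T*γ) * θ * Real.exp (T*K₁) * δy 0 +
      T * Real.exp (T*γ) * (θ * (Real.exp (T*K₁) - 1) * K₂ + σ) * uL +
      T * Real.exp (T*γ) * (θ * (Real.exp (T*K₁) - 1) * K₃ + 1) * uH / h := by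
    rw [hCdef, hYdef]
    field_simp
    ring
  linarith
end
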